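/- arXiv:1512.06611 — 4 statements merged into one kernel-verified Lean document; each statement's English description precedes it below -/
import Mathlib

section
/- If {x_n} and {y_n} are sequences in a partial metric space converging symmetrically to x and y respectively, then lim_{n→∞} p(x_n,y_n) = p(x,y). -/
open Filter Topology

theorem stmt_11 {X : Type*}
    (p : X → X → ℝ)
    (hp0 : ∀ x y, 0 ≤ p x y)
    (hp1 : ∀ x y, p x x = p x y → p y y = p x y → x = y)
    (hp2 : ∀ x y, p x y = p y x)
    (hp3 : ∀ x y, p x x ≤ p x y)
    (hp4 : ∀ x y z, p x z ≤ p x y + p y z - p y y)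
    (x y : X) (u v : ℕ → X)
    (hsx : Tendsto (fun n => p (u n) x) atTop (𝓝 (p x x)))
    (hsx' : Tendsto (fun n => p (u n) (u n)) atTop (𝓝 (p x x)))
    (hsy : Tendsto (fun n => p (v n) y) atTop (𝓝 (p y y)))
    (hsy' : Tendsto (fun n => p (v n) (v n)) atTop (𝓝 (p y y))) :
    Tendsto (fun n => p (u n) (v n)) atTop (𝓝 (p x y)) := by
  have hlo : Tendsto (fun n => p x y - p (u n) x - p (v n) y + p (u n) (u n) + p (v n) (v n))
      atTop (𝓝 (p x y - p x x - p y y + p x x + p y y)) := by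
    exact (((((tendsto_const_nhds.sub hsx).sub hsy).add hsx').add hsy'))
  have hhi : Tendsto (fun n => p (u n) x + p x y + p (v n) y - p x x - p y y)
      atTop (𝓝 (p x x + p x y + p y y - p x x - p y y)) := by
    exact ((((hsx.add tendsto_const_nhds).add hsy).sub tendsto_const_nhds).sub tendsto_const_nhds)
  have e1 : p x y - p x x - p y y + p x x + p y y = p x y := by ring
  have e2 : p x x + p x y + p y y - p x x - p y y = p x y := by ring
  rw [e1] at hlo; rw [e2] at hhi
  refine tendsto_of_tendsto_of_tendsto_of_le_of_le hlo hhi (fun n => ?_) (fun n => ?_)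
  · have h1 : p x y ≤ p x (u n) + p (u n) y - p (u n) (u n) := hp4 x (u n) y
    have h2 : p (u n) y ≤ p (u n) (v n) + p (v n) y - p (v n) (v n) := hp4 (u n) (v n) y
    have := hp2 x (u n)
    linarith
  · have h1 : p (u n) (v n) ≤ p (u n) x + p x (v n) - p x x := hp4 (u n) x (v n)
    have h2 : p x (v n) ≤ p x y + p y (v n) - p y y := hp4 x y (v n)
    have := hp2 y (v n)
    linarith
end

section
/- (Caristi–Kirk in partial metric spaces, corrected) Let (X,p) be a complete partial metric space, φ : X → [0,∞) lower semicontinuous (with respect to symmetric convergence), and T : X → X a self-map satisfying p(x,Tx) ≤ φ(x) − φ(Tx) for all x ∈ X. Suppose additionally {x ∈ X : p(x,x) = 0} ≠ ∅. Then T has a fixed point. -/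
open Filter Topology

theorem stmt_14 {X : Type*}
    (p : X → X → ℝ)
    (hp0 : ∀ x y, 0 ≤ p x y)
    (hp1 : ∀ x y, p x x = p x y → p y y = p x y → x = y)
    (hp2 : ∀ x y, p x y = p y x)
    (hp3 : ∀ x y, p x x ≤ p x y)
    (hp4 : ∀ x y z, p x z ≤ p x y + p y z - p y y)
    (hcomplete : ∀ u : ℕ → X,
      (∃ L : ℝ, Tendsto (fun q : ℕ × ℕ => p (u q.1) (u q.2)) atTop (𝓝 L)) →
      ∃ z : X, Tendsto (fun n => p (u n) z) atTop (𝓝 (p z z)) ∧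
        Tendsto (fun q : ℕ × ℕ => p (u q.1) (u q.2)) atTop (𝓝 (p z z)))
    (φ : X → ℝ) (hφ0 : ∀ x, 0 ≤ φ x)
    (hlsc : ∀ (u : ℕ → X) (x : X),
      Tendsto (fun n => p (u n) x) atTop (𝓝 (p x x)) →
      Tendsto (fun n => p (u n) (u n)) atTop (𝓝 (p x x)) →
      φ x ≤ Filter.liminf (fun n => φ (u n)) atTop)
    (T : X → X)
    (hT : ∀ x, p x (T x) ≤ φ x - φ (T x))
    (hX0 : ∃ x : X, p x x = 0) :
    ∃ z : X, T z = z := by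
  classical
  obtain ⟨x0, -⟩ := hX0
  -- the relation "y is below a"
  set P : X → X → Prop := fun a y => p a y ≤ φ a - φ y with hP
  -- approximate minimization step
  have hstep : ∀ (a : X) (n : ℕ), ∃ y, P a y ∧ ∀ w, P a w → φ y ≤ φ w + (1/2 : ℝ)^n := by
    intro a n
    set s : Set ℝ := φ '' {y | P a y} with hs
    have hne : s.Nonempty := ⟨φ (T a), ⟨T a, hT a, rfl⟩⟩
    have hbdd : BddBelow s := ⟨0, by rintro r ⟨y, -, rfl⟩; exact hφ0 y⟩
    obtain ⟨r, ⟨y, hy, rfl⟩, hr⟩ := Real.lt_sInf_add_pos hne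
      (by positivity : (0:ℝ) < (1/2:ℝ)^n)
    exact ⟨y, hy, fun w hw => le_trans hr.le
      (by linarith [csInf_le hbdd (⟨w, hw, rfl⟩ : φ w ∈ s)])⟩
  -- the sequence
  set x : ℕ → X := fun n => Nat.rec x0 (fun n a => Classical.choose (hstep a n)) n with hx
  have hxs : ∀ n : ℕ, x (n+1) = Classical.choose (hstep (x n) n) := fun n => rfl
  have hxspec : ∀ n : ℕ, P (x n) (x (n+1)) ∧
      ∀ w, P (x n) w → φ (x (n+1)) ≤ φ w + (1/2 : ℝ)^n := by
    intro n; rw [hxs n]; exact Classical.choose_spec (hstep (x n) n)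
  have hanti : ∀ n, φ (x (n+1)) ≤ φ (x n) := by
    intro n
    have := (hxspec n).1
    have := hp0 (x n) (x (n+1))
    simp only [hP] at *
    linarith
  have hantitone : Antitone (fun n => φ (x n)) :=
    antitone_nat_of_succ_le hanti
  -- chain inequality
  have hchain : ∀ n m, n < m → P (x n) (x m) := by
    intro n m hnm
    induction m with
    | zero => omega
    | succ m ih =>
      rcases Nat.lt_succ_iff_lt_or_eq.mp hnm with h | h
      · have h1 := ih h
        have h2 := (hxspec m).1
        have h3 := hp4 (x n) (x m) (x (m+1))
        have h4 := hp0 (x m) (x m)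
        simp only [hP] at *
        linarith
      · subst h; exact (hxspec n).1
  -- limit of φ along the sequence
  set L : ℝ := ⨅ n, φ (x n) with hL
  have hbddr : BddBelow (Set.range fun n => φ (x n)) :=
    ⟨0, by rintro r ⟨n, rfl⟩; exact hφ0 (x n)⟩
  have hφtend : Tendsto (fun n => φ (x n)) atTop (𝓝 L) :=
    tendsto_atTop_ciInf hantitone hbddr
  have hLle : ∀ n, L ≤ φ (x n) := fun n => ciInf_le hbddr n
  -- p (x n) (x m) ≤ φ (x n) - L for n ≤ m
  have hkey : ∀ n m, n ≤ m → p (x n) (x m) ≤ φ (x n) - L := by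
    intro n m hnm
    rcases eq_or_lt_of_le hnm with h | h
    · subst h
      have h1 := hp3 (x n) (x (n+1))
      have h2 := (hxspec n).1
      have := hLle (n+1)
      simp only [hP] at *
      linarith
    · have := hchain n m h
      have := hLle m
      simp only [hP] at *
      linarith
  have hkey' : ∀ q : ℕ × ℕ, p (x q.1) (x q.2) ≤ φ (x (min q.1 q.2)) - L := by
    rintro ⟨n, m⟩
    rcases le_total n m with h | h
    · simpa [min_eq_left h] using hkey n m h
    · rw [hp2]
      simpa [min_eq_right h] using hkey m n h
  -- Cauchy-ness: double limit is 0
  have hmin : Tendsto (fun q : ℕ × ℕ => min q.1 q.2) atTop atTop := by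
    rw [tendsto_atTop]
    intro b
    filter_upwards [eventually_ge_atTop ((b, b) : ℕ × ℕ)] with q hq
    exact le_min hq.1 hq.2
  have hub : Tendsto (fun q : ℕ × ℕ => φ (x (min q.1 q.2)) - L) atTop (𝓝 0) := by
    have h := Tendsto.sub (g := fun _ : ℕ × ℕ => L) (hφtend.comp hmin) tendsto_const_nhds
    simpa using h
  have hcauchy : Tendsto (fun q : ℕ × ℕ => p (x q.1) (x q.2)) atTop (𝓝 0) := by
    refine tendsto_of_tendsto_of_tendsto_of_le_of_le tendsto_const_nhds hub
      (fun q => hp0 _ _) (fun q => hkey' q)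
  obtain ⟨z, hz1, hz2⟩ := hcomplete x ⟨0, hcauchy⟩
  have hzz : p z z = 0 := tendsto_nhds_unique hz2 hcauchy
  rw [hzz] at hz1 hz2
  -- diagonal
  have hdiag : Tendsto (fun n => p (x n) (x n)) atTop (𝓝 0) := by
    have hdt : Tendsto (fun n : ℕ => ((n, n) : ℕ × ℕ)) atTop atTop := by
      rw [← prod_atTop_atTop_eq]
      exact tendsto_id.prodMk tendsto_id
    exact hz2.comp hdt
  -- lower semicontinuity
  have hφz : φ z ≤ L := by
    have := hlsc x z (by rw [hzz]; exact hz1) (by rw [hzz]; exact hdiag)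
    rwa [hφtend.liminf_eq] at this
  -- z is below every x n
  have hzP : ∀ n, P (x n) z := by
    intro n
    have hlim : Tendsto (fun m => φ (x n) - φ (x m) + p (x m) z) atTop
        (𝓝 (φ (x n) - L + 0)) :=
      (tendsto_const_nhds.sub hφtend).add hz1
    have hle : p (x n) z ≤ φ (x n) - L + 0 := by
      refine ge_of_tendsto hlim ?_
      filter_upwards [eventually_ge_atTop (n+1)] with m hm
      have h1 := hp4 (x n) (x m) z
      have h2 := hchain n m (by omega)
      have h3 := hp0 (x m) (x m)
      simp only [hP] at *
      linarith
    simp only [hP]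
    linarith
  -- T z is below every x n
  have hTzP : ∀ n, P (x n) (T z) := by
    intro n
    have h1 := hp4 (x n) z (T z)
    have h2 := hzP n
    have h3 := hT z
    have h4 := hp0 z z
    simp only [hP] at *
    linarith
  -- φ (T z) ≥ L
  have hTzL : L ≤ φ (T z) := by
    have hlim : Tendsto (fun n : ℕ => φ (T z) + (1/2 : ℝ)^n) atTop (𝓝 (φ (T z) + 0)) :=
      tendsto_const_nhds.add (tendsto_pow_atTop_nhds_zero_of_lt_one (by norm_num) (by norm_num))
    have : Tendsto (fun n => φ (x (n+1))) atTop (𝓝 L) :=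
      hφtend.comp (tendsto_add_atTop_nat 1)
    have := le_of_tendsto_of_tendsto' this hlim
      (fun n => (hxspec n).2 (T z) (hTzP n))
    linarith
  -- conclude
  have hpz : p z (T z) = 0 := le_antisymm (by have := hT z; linarith) (hp0 _ _)
  have hTzTz : p (T z) (T z) = 0 := by
    have := hp3 (T z) z
    have := hp0 (T z) (T z)
    rw [hp2] at hpz
    linarith
  exact ⟨z, (hp1 z (T z) (by rw [hzz, hpz]) (by rw [hTzTz, hpz])).symm⟩
end

section
/- (Weakened Caristi–Kirk in partial metric spaces) Let (X,p) be a complete partial metric space, φ : X → [0,∞) lower semicontinuous, and T : X → X satisfy p(x,Tx) ≤ p(x,x) + φ(x) − φ(Tx) for all x ∈ X. Then T has a fixed point. -/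
open Filter Topology

theorem caristi_aux {X : Type*} [Nonempty X]
    (d : X → X → ℝ)
    (hd0 : ∀ x y, 0 ≤ d x y)
    (hdself : ∀ x, d x x = 0)
    (hdsymm : ∀ x y, d x y = d y x)
    (hdtri : ∀ x y z, d x z ≤ d x y + d y z)
    (hdeq : ∀ x y, d x y = 0 → x = y)
    (ψ : X → ℝ) (hψ0 : ∀ x, 0 ≤ ψ x)
    (hcomp : ∀ u : ℕ → X,
      (∀ ε > (0:ℝ), ∃ N, ∀ n ≥ N, ∀ m ≥ N, d (u n) (u m) ≤ ε) →
      ∀ ℓ : ℝ, Tendsto (fun n => ψ (u n)) atTop (𝓝 ℓ) →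
      ∃ z : X, Tendsto (fun n => d (u n) z) atTop (𝓝 0) ∧ ψ z ≤ ℓ)
    (T : X → X) (hT : ∀ x, d x (T x) ≤ ψ x - ψ (T x)) :
    ∃ z : X, T z = z := by
  classical
  set S : X → Set X := fun x => {y | d x y ≤ ψ x - ψ y} with hS
  have hself : ∀ x, x ∈ S x := by
    intro x; simp only [hS, Set.mem_setOf_eq, hdself, sub_self, le_refl]
  have hne : ∀ x, (ψ '' S x).Nonempty := fun x => ⟨ψ x, x, hself x, rfl⟩
  have hbdd : ∀ x, BddBelow (ψ '' S x) := by
    intro x; exact ⟨0, by rintro _ ⟨y, -, rfl⟩; exact hψ0 y⟩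
  have htrans : ∀ x y z, y ∈ S x → z ∈ S y → z ∈ S x := by
    intro x y z hy hz
    simp only [hS, Set.mem_setOf_eq] at *
    have := hdtri x y z
    linarith
  have hex : ∀ (x : X) (ε : ℝ), 0 < ε → ∃ y, y ∈ S x ∧ ψ y < sInf (ψ '' S x) + ε := by
    intro x ε hε
    have : sInf (ψ '' S x) < sInf (ψ '' S x) + ε := by linarith
    obtain ⟨v, ⟨y, hy, rfl⟩, hv⟩ := (csInf_lt_iff (hbdd x) (hne x)).1 this
    exact ⟨y, hy, hv⟩
  obtain ⟨x₀⟩ := ‹Nonempty X›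
  let u : ℕ → X := fun n => Nat.rec x₀
    (fun n x => Classical.choose (hex x ((1/2:ℝ)^n) (by positivity))) n
  have hu_succ : ∀ n, u (n+1) = Classical.choose (hex (u n) ((1/2:ℝ)^n) (by positivity)) := by
    intro n; rfl
  have hu1 : ∀ n, u (n+1) ∈ S (u n) := by
    intro n; rw [hu_succ n]
    exact (Classical.choose_spec (hex (u n) ((1/2:ℝ)^n) (by positivity))).1
  have hu2 : ∀ n, ψ (u (n+1)) < sInf (ψ '' S (u n)) + (1/2:ℝ)^n := by
    intro n; rw [hu_succ n]
    exact (Classical.choose_spec (hex (u n) ((1/2:ℝ)^n) (by positivity))).2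
  have hchain : ∀ n m, n ≤ m → u m ∈ S (u n) := by
    intro n m hnm
    induction m with
    | zero => simpa [Nat.le_zero.1 hnm] using hself (u 0)
    | succ k ih =>
      rcases Nat.lt_or_ge n (k+1) with h | h
      · exact htrans _ _ _ (ih (Nat.lt_succ_iff.1 h)) (hu1 k)
      · have : n = k + 1 := le_antisymm hnm h
        simpa [this] using hself (u (k+1))
  have hanti : Antitone (fun n => ψ (u n)) := by
    apply antitone_nat_of_succ_le
    intro n
    have h := hu1 n
    simp only [hS, Set.mem_setOf_eq] at h
    have := hd0 (u n) (u (n+1))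
    linarith
  have hbddb : BddBelow (Set.range fun n => ψ (u n)) :=
    ⟨0, by rintro _ ⟨n, rfl⟩; exact hψ0 _⟩
  set ℓ : ℝ := ⨅ n, ψ (u n) with hℓ
  have hlim : Tendsto (fun n => ψ (u n)) atTop (𝓝 ℓ) := tendsto_atTop_ciInf hanti hbddb
  have hℓle : ∀ n, ℓ ≤ ψ (u n) := fun n => ciInf_le hbddb n
  have hcauchy : ∀ ε > (0:ℝ), ∃ N, ∀ n ≥ N, ∀ m ≥ N, d (u n) (u m) ≤ ε := by
    intro ε hε
    obtain ⟨N, hN⟩ := (Metric.tendsto_atTop.1 hlim) ε hε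
    refine ⟨N, fun n hn m hm => ?_⟩
    have key : ∀ a b, N ≤ a → a ≤ b → d (u a) (u b) ≤ ε := by
      intro a b ha hab
      have h := hchain a b hab
      simp only [hS, Set.mem_setOf_eq] at h
      have h1 := hN a ha
      rw [Real.dist_eq, abs_lt] at h1
      have := hℓle b
      linarith
    rcases le_total n m with h | h
    · exact key n m hn h
    · rw [hdsymm]; exact key m n hm h
  obtain ⟨z, hz1, hz2⟩ := hcomp u hcauchy ℓ hlim
  have hzS : ∀ n, z ∈ S (u n) := by
    intro n
    simp only [hS, Set.mem_setOf_eq]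
    have hle : d (u n) z ≤ ψ (u n) - ℓ := by
      have hev : ∀ᶠ m in atTop, d (u n) z ≤ ψ (u n) - ψ (u m) + d (u m) z := by
        filter_upwards [eventually_ge_atTop n] with m hm
        have h := hchain n m hm
        simp only [hS, Set.mem_setOf_eq] at h
        have := hdtri (u n) (u m) z
        linarith
      have : Tendsto (fun m => ψ (u n) - ψ (u m) + d (u m) z) atTop
          (𝓝 (ψ (u n) - ℓ + 0)) := ((tendsto_const_nhds.sub hlim).add hz1)
      exact le_of_tendsto_of_tendsto tendsto_const_nhds this hev |>.trans (by linarith)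
    linarith [hz2]
  have hTzS : ∀ n, T z ∈ S (u n) := fun n => htrans _ _ _ (hzS n) (hT z)
  have hℓTz : ℓ ≤ ψ (T z) := by
    have key : ∀ n, ψ (u (n+1)) - (1/2:ℝ)^n ≤ ψ (T z) := by
      intro n
      have h1 : sInf (ψ '' S (u n)) ≤ ψ (T z) :=
        csInf_le (hbdd _) ⟨T z, hTzS n, rfl⟩
      have := hu2 n
      linarith
    have hten : Tendsto (fun n => ψ (u (n+1)) - (1/2:ℝ)^n) atTop (𝓝 (ℓ - 0)) :=
      (hlim.comp (tendsto_add_atTop_nat 1)).sub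
        (tendsto_pow_atTop_nhds_zero_of_lt_one (by norm_num) (by norm_num))
    have := le_of_tendsto hten (Eventually.of_forall key)
    linarith
  have hdz : d z (T z) = 0 := by
    have h := hT z
    have := hd0 z (T z)
    linarith [hz2]
  exact ⟨z, (hdeq _ _ hdz).symm⟩
theorem stmt_15 {X : Type*} [Nonempty X]
    (p : X → X → ℝ)
    (hp0 : ∀ x y, 0 ≤ p x y)
    (hp1 : ∀ x y, p x x = p x y → p y y = p x y → x = y)
    (hp2 : ∀ x y, p x y = p y x)
    (hp3 : ∀ x y, p x x ≤ p x y)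
    (hp4 : ∀ x y z, p x z ≤ p x y + p y z - p y y)
    (hcomplete : ∀ u : ℕ → X,
      (∃ L : ℝ, Tendsto (fun q : ℕ × ℕ => p (u q.1) (u q.2)) atTop (𝓝 L)) →
      ∃ z : X, Tendsto (fun n => p (u n) z) atTop (𝓝 (p z z)) ∧
        Tendsto (fun q : ℕ × ℕ => p (u q.1) (u q.2)) atTop (𝓝 (p z z)))
    (φ : X → ℝ) (hφ0 : ∀ x, 0 ≤ φ x)
    (hlsc : ∀ (u : ℕ → X) (x : X),
      Tendsto (fun n => p (u n) x) atTop (𝓝 (p x x)) →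
      φ x ≤ Filter.liminf (fun n => φ (u n)) atTop)
    (T : X → X)
    (hT : ∀ x, p x (T x) ≤ p x x + φ x - φ (T x)) :
    ∃ z : X, T z = z := by
  set d : X → X → ℝ := fun x y => 2 * p x y - p x x - p y y with hd
  set ψ : X → ℝ := fun x => p x x + 2 * φ x with hψ
  refine caristi_aux d ?_ ?_ ?_ ?_ ?_ ψ ?_ ?_ T ?_
  · intro x y
    have h1 := hp3 x y
    have h2 := hp3 y x
    have h3 := hp2 x y
    simp only [hd]; linarith
  · intro x; simp only [hd]; ring
  · intro x y; have := hp2 x y; simp only [hd]; linarith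
  · intro x y z
    have := hp4 x y z
    simp only [hd]; linarith
  · intro x y h
    have h1 := hp3 x y
    have h2 := hp3 y x
    have h3 := hp2 x y
    simp only [hd] at h
    exact hp1 x y (by linarith) (by linarith)
  · intro x; have := hp0 x x; have := hφ0 x; simp only [hψ]; linarith
  · -- completeness
    intro u hcau ℓ hψlim
    -- p (u n) (u n) is Cauchy
    have hdd : ∀ n m, |p (u n) (u n) - p (u m) (u m)| ≤ d (u n) (u m) := by
      intro n m
      have h1 := hp3 (u n) (u m)
      have h2 := hp3 (u m) (u n)
      have h3 := hp2 (u n) (u m)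
      rw [abs_le]; constructor <;> (simp only [hd]; linarith)
    have hcs : CauchySeq (fun n => p (u n) (u n)) := by
      rw [Metric.cauchySeq_iff]
      intro ε hε
      obtain ⟨N, hN⟩ := hcau (ε/2) (by linarith)
      refine ⟨N, fun m hm n hn => ?_⟩
      have ha := hdd m n
      have hb := hN m hm n hn
      rw [Real.dist_eq]
      calc |p (u m) (u m) - p (u n) (u n)| ≤ d (u m) (u n) := ha
        _ ≤ ε/2 := hb
        _ < ε := by linarith
    obtain ⟨L, hL⟩ := cauchySeq_tendsto_of_complete hcs
    have hjoint : Tendsto (fun q : ℕ × ℕ => p (u q.1) (u q.2)) atTop (𝓝 L) := by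
      rw [Metric.tendsto_atTop]
      intro ε hε
      obtain ⟨N1, hN1⟩ := hcau (ε/2) (by linarith)
      obtain ⟨N2, hN2⟩ := (Metric.tendsto_atTop.1 hL) (ε/2) (by linarith)
      refine ⟨(max N1 N2, max N1 N2), fun q hq => ?_⟩
      obtain ⟨h1, h2⟩ := hq
      have hq1 : max N1 N2 ≤ q.1 := h1
      have hq2 : max N1 N2 ≤ q.2 := h2
      have hd1 := hN1 q.1 (le_trans (le_max_left _ _) hq1) q.2 (le_trans (le_max_left _ _) hq2)
      have hd2 : (0:ℝ) ≤ d (u q.1) (u q.2) := by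
        have h1 := hp3 (u q.1) (u q.2)
        have h2 := hp3 (u q.2) (u q.1)
        have h3 := hp2 (u q.1) (u q.2)
        simp only [hd]; linarith
      have hb1 := hN2 q.1 (le_trans (le_max_right _ _) hq1)
      have hb2 := hN2 q.2 (le_trans (le_max_right _ _) hq2)
      rw [Real.dist_eq, abs_lt] at hb1 hb2 ⊢
      simp only [hd] at hd1 hd2
      constructor <;> linarith [hd1, hd2, hb1.1, hb1.2, hb2.1, hb2.2]
    obtain ⟨z, hz1, hz2⟩ := hcomplete u ⟨L, hjoint⟩
    have hLz : L = p z z := tendsto_nhds_unique hjoint hz2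
    rw [hLz] at hL
    refine ⟨z, ?_, ?_⟩
    · have : Tendsto (fun n => 2 * p (u n) z - p (u n) (u n) - p z z) atTop
        (𝓝 (2 * p z z - p z z - p z z)) :=
        (((hz1.const_mul 2).sub hL).sub tendsto_const_nhds)
      simp only [hd]
      convert this using 2
      ring
    · have hφlim : Tendsto (fun n => φ (u n)) atTop (𝓝 ((ℓ - p z z)/2)) := by
        have h := (hψlim.sub hL).div_const 2
        have heq : (fun n => (ψ (u n) - p (u n) (u n)) / 2) = fun n => φ (u n) := by
          funext n; simp only [hψ]; ring
        rwa [heq] at h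
      have hliminf : Filter.liminf (fun n => φ (u n)) atTop = (ℓ - p z z)/2 :=
        hφlim.liminf_eq
      have := hlsc u z hz1
      rw [hliminf] at this
      simp only [hψ]
      linarith
  · intro x
    have h := hT x
    have h1 := hp3 x (T x)
    have h2 := hp3 (T x) x
    have h3 := hp2 x (T x)
    simp only [hd, hψ]
    linarith
end

section
/- (Ekeland-type variational principle in partial metric spaces) Let (X,p) be a complete partial metric space and φ : X → [0,∞) weakly (symmetrically) lower semicontinuous. Then there exists z ∈ X such that φ(z) < φ(x) + p(z,x) − p(z,z) for all x ∈ X with x ≠ z. -/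
open Filter Topology

theorem stmt_18 {X : Type*} [Nonempty X]
    (p : X → X → ℝ)
    (hp0 : ∀ x y, 0 ≤ p x y)
    (hp1 : ∀ x y, p x x = p x y → p y y = p x y → x = y)
    (hp2 : ∀ x y, p x y = p y x)
    (hp3 : ∀ x y, p x x ≤ p x y)
    (hp4 : ∀ x y z, p x z ≤ p x y + p y z - p y y)
    (hcomplete : ∀ u : ℕ → X,
      (∃ L : ℝ, Tendsto (fun q : ℕ × ℕ => p (u q.1) (u q.2)) atTop (𝓝 L)) →
      ∃ z : X, Tendsto (fun n => p (u n) z) atTop (𝓝 (p z z)) ∧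
        Tendsto (fun q : ℕ × ℕ => p (u q.1) (u q.2)) atTop (𝓝 (p z z)))
    (φ : X → ℝ) (hφ0 : ∀ x, 0 ≤ φ x)
    (hlsc : ∀ (u : ℕ → X) (x : X),
      Tendsto (fun n => p (u n) x) atTop (𝓝 (p x x)) →
      Tendsto (fun n => p (u n) (u n)) atTop (𝓝 (p x x)) →
      φ x ≤ Filter.liminf (fun n => φ (u n)) atTop) :
    ∃ z : X, ∀ x : X, x ≠ z → φ z < φ x + p z x - p z z := by
  classical
  obtain ⟨x₀⟩ := ‹Nonempty X›
  obtain ⟨S, hSdef⟩ : ∃ S : X → Set X, ∀ x y, y ∈ S x ↔ φ y + p x y - p x x ≤ φ x :=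
    ⟨fun x => {y | φ y + p x y - p x x ≤ φ x}, fun _ _ => Iff.rfl⟩
  obtain ⟨χ, hχdef⟩ : ∃ χ : X → ℝ, ∀ x, χ x = 2 * φ x + p x x := ⟨_, fun _ => rfl⟩
  have hself : ∀ x, x ∈ S x := by
    intro x
    rw [hSdef]
    linarith
  have hφmono : ∀ {x y}, y ∈ S x → φ y ≤ φ x := by
    intro x y hy
    have h3 := hp3 x y
    rw [hSdef] at hy
    linarith
  have hχmono : ∀ {x y}, y ∈ S x → χ y ≤ χ x := by
    intro x y hy
    have h3 := hp3 y x
    have h2 := hp2 y x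
    have hφ := hφmono hy
    rw [hSdef] at hy
    rw [hχdef, hχdef]
    linarith
  have htrans : ∀ {x y}, y ∈ S x → S y ⊆ S x := by
    intro x y hy w hw
    have h4 := hp4 x y w
    rw [hSdef] at hy hw ⊢
    linarith
  have hχ0 : ∀ x, 0 ≤ χ x := by
    intro x
    have := hφ0 x
    have := hp0 x x
    rw [hχdef]
    linarith
  have hbdd : ∀ x, BddBelow (χ '' S x) := fun x => ⟨0, by rintro r ⟨y, -, rfl⟩; exact hχ0 y⟩
  have hne : ∀ x, (χ '' S x).Nonempty := fun x => ⟨χ x, x, hself x, rfl⟩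
  have hstep : ∀ (x : X) (ε : ℝ), 0 < ε → ∃ y, y ∈ S x ∧ χ y < sInf (χ '' S x) + ε := by
    intro x ε hε
    obtain ⟨r, ⟨y, hy, rfl⟩, hlt⟩ :=
      exists_lt_of_csInf_lt (hne x) (lt_add_of_pos_right (sInf (χ '' S x)) hε)
    exact ⟨y, hy, hlt⟩
  obtain ⟨u, huspec⟩ : ∃ u : ℕ → X,
      ∀ n, u (n+1) ∈ S (u n) ∧ χ (u (n+1)) < sInf (χ '' S (u n)) + (1/2 : ℝ)^n :=
    ⟨fun n => Nat.rec x₀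
        (fun k xk => Classical.choose (hstep xk ((1/2 : ℝ)^k) (by positivity))) n,
      fun n => Classical.choose_spec (hstep _ ((1/2 : ℝ)^n) (by positivity))⟩
  have hchain : ∀ n m, n ≤ m → u m ∈ S (u n) := by
    intro n m hnm
    induction m, hnm using Nat.le_induction with
    | base => exact hself _
    | succ m hnm ih => exact htrans ih (huspec m).1
  have hφanti : Antitone fun n => φ (u n) := antitone_nat_of_succ_le fun n => hφmono (huspec n).1
  have hχanti : Antitone fun n => χ (u n) := antitone_nat_of_succ_le fun n => hχmono (huspec n).1
  have hφbdd : BddBelow (Set.range fun n => φ (u n)) := ⟨0, by rintro r ⟨n, rfl⟩; exact hφ0 _⟩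
  have hχbdd : BddBelow (Set.range fun n => χ (u n)) := ⟨0, by rintro r ⟨n, rfl⟩; exact hχ0 _⟩
  obtain ⟨c, hφlim⟩ : ∃ c, Tendsto (fun n => φ (u n)) atTop (𝓝 c) :=
    ⟨_, tendsto_atTop_ciInf hφanti hφbdd⟩
  obtain ⟨C, hχlim⟩ : ∃ C, Tendsto (fun n => χ (u n)) atTop (𝓝 C) :=
    ⟨_, tendsto_atTop_ciInf hχanti hχbdd⟩
  obtain ⟨L, hLdef⟩ : ∃ L : ℝ, L = C - 2 * c := ⟨_, rfl⟩
  have halim : Tendsto (fun n => p (u n) (u n)) atTop (𝓝 L) := by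
    have heq : (fun n => p (u n) (u n)) = fun n => χ (u n) - 2 * φ (u n) := by
      funext n; rw [hχdef]; ring
    rw [heq, hLdef]
    exact hχlim.sub (hφlim.const_mul 2)
  have hcge : ∀ n, c ≤ φ (u n) := fun n =>
    le_of_tendsto hφlim (Filter.eventually_atTop.2 ⟨n, fun m hm => hφanti hm⟩)
  have hup : ∀ n m, n ≤ m → p (u n) (u m) ≤ p (u n) (u n) + (φ (u n) - φ (u m)) := by
    intro n m hnm
    have hch := hchain n m hnm
    rw [hSdef] at hch
    linarith
  have hlow : ∀ n m, p (u m) (u m) ≤ p (u n) (u m) :=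
    fun n m => le_trans (hp3 (u m) (u n)) (le_of_eq (hp2 (u m) (u n)))
  have hpair : Tendsto (fun q : ℕ × ℕ => p (u q.1) (u q.2)) atTop (𝓝 L) := by
    rw [Metric.tendsto_atTop]
    intro ε hε
    obtain ⟨N₁, hN₁⟩ := Metric.tendsto_atTop.1 halim (ε/2) (by linarith)
    obtain ⟨N₂, hN₂⟩ := Metric.tendsto_atTop.1 hφlim (ε/2) (by linarith)
    refine ⟨(max N₁ N₂, max N₁ N₂), ?_⟩
    have key : ∀ n m, max N₁ N₂ ≤ n → max N₁ N₂ ≤ m → n ≤ m →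
        dist (p (u n) (u m)) L < ε := by
      intro n m hn hm hnm
      have h1 := hN₁ n (le_trans (le_max_left _ _) hn)
      have h1' := hN₁ m (le_trans (le_max_left _ _) hm)
      have h2 := hN₂ n (le_trans (le_max_right _ _) hn)
      have h2' := hN₂ m (le_trans (le_max_right _ _) hm)
      rw [Real.dist_eq, abs_lt] at h1 h1' h2 h2' ⊢
      have hu1 := hup n m hnm
      have hl1 := hlow n m
      have hc1 := hcge m
      constructor
      · linarith [h1.1, h1'.1, h2.1, h2'.1]
      · linarith [h1.2, h2.2]
    rintro ⟨n, m⟩ hq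
    rcases le_total n m with h | h
    · exact key n m hq.1 hq.2 h
    · have hk := key m n hq.2 hq.1 h
      rwa [hp2 (u m) (u n)] at hk
  obtain ⟨z, hz1, hz2⟩ := hcomplete u ⟨L, hpair⟩
  have hzz : p z z = L := tendsto_nhds_unique hz2 hpair
  have hφz : φ z ≤ c := by
    have h2 : Tendsto (fun n => p (u n) (u n)) atTop (𝓝 (p z z)) := by rw [hzz]; exact halim
    have hl := hlsc u z hz1 h2
    rwa [hφlim.liminf_eq] at hl
  have hzS : ∀ n, z ∈ S (u n) := by
    intro n
    have hbound : p (u n) z ≤ p (u n) (u n) + (φ (u n) - c) := by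
      have htends : Tendsto
          (fun m => ((p (u n) (u n) + φ (u n)) - φ (u m) + p (u m) z) - p (u m) (u m)) atTop
          (𝓝 (((p (u n) (u n) + φ (u n)) - c + p z z) - L)) :=
        ((tendsto_const_nhds.sub hφlim).add hz1).sub halim
      have hev : ∀ᶠ m in atTop,
          p (u n) z ≤ ((p (u n) (u n) + φ (u n)) - φ (u m) + p (u m) z) - p (u m) (u m) := by
        filter_upwards [eventually_ge_atTop n] with m hm
        have h4 := hp4 (u n) (u m) z
        have hu1 := hup n m hm
        linarith
      have hle := ge_of_tendsto htends hev
      rw [hzz] at hle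
      linarith
    rw [hSdef]
    linarith
  have hmin : ∀ x, (∀ n, x ∈ S (u n)) → φ x = c ∧ p x x = L := by
    intro x hx
    have hφxc : φ x ≤ c :=
      ge_of_tendsto hφlim (Eventually.of_forall fun n => hφmono (hx n))
    have hχxC : C ≤ χ x := by
      have ht : Tendsto (fun n => χ (u (n+1)) - (1/2 : ℝ)^n) atTop (𝓝 (C - 0)) :=
        (hχlim.comp (tendsto_add_atTop_nat 1)).sub
          (tendsto_pow_atTop_nhds_zero_of_lt_one (by norm_num) (by norm_num))
      have hev : ∀ n, χ (u (n+1)) - (1/2 : ℝ)^n ≤ χ x := by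
        intro n
        have h1 := (huspec n).2
        have h2 : sInf (χ '' S (u n)) ≤ χ x := csInf_le (hbdd _) ⟨x, hx n, rfl⟩
        linarith
      have hfin := le_of_tendsto ht (Eventually.of_forall hev)
      linarith
    have hpxx_le : p x x ≤ L + (c - φ x) := by
      have ht : Tendsto (fun n => p (u n) (u n) + (φ (u n) - φ x)) atTop
          (𝓝 (L + (c - φ x))) := halim.add (hφlim.sub_const _)
      apply ge_of_tendsto ht
      refine Eventually.of_forall fun n => ?_
      have hxn := hx n
      rw [hSdef] at hxn
      have h3 : p x x ≤ p (u n) x := le_trans (hp3 x (u n)) (le_of_eq (hp2 x (u n)))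
      linarith
    rw [hχdef] at hχxC
    constructor
    · linarith
    · linarith
  refine ⟨z, fun x hxz => ?_⟩
  by_contra hcon
  push_neg at hcon
  have hxSz : x ∈ S z := by rw [hSdef]; exact hcon
  have hxall : ∀ n, x ∈ S (u n) := fun n => htrans (hzS n) hxSz
  obtain ⟨hφx, hpxx⟩ := hmin x hxall
  obtain ⟨hφzc, -⟩ := hmin z hzS
  have hpzx : p z x = L := by
    have hge : L ≤ p z x := hzz ▸ hp3 z x
    linarith
  exact hxz (hp1 z x (by rw [hzz, hpzx]) (by rw [hpxx, hpzx])).symm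
end
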